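/- Let n ≥ 7. Every improper set of cells of an n×n array has at most 2n−2 cells; consequently, every set of at least 2n−1 cells of an n×n array contains a proper subset of size n. -/

import Mathlib

/-- A diagonal of an `n × n` array: the set of cells forming the graph of a
permutation of `Fin n` (n cells, no two in the same row or column). -/
def IsDiagonal (n : ℕ) (D : Finset (Fin n × Fin n)) : Prop :=
  ∃ σ : Equiv.Perm (Fin n), D = Finset.univ.image fun i => (i, σ i)

/-- A set of cells is improper if there are indices `i, j` such that every cell
lies in row `i` or in column `j` but not in both. -/
def IsImproper (n : ℕ) (A : Finset (Fin n × Fin n)) : Prop :=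
  ∃ i j : Fin n, ∀ c ∈ A, (c.1 = i ∨ c.2 = j) ∧ c ≠ (i, j)

/-- A set of cells is proper if it is not improper. -/
def IsProper (n : ℕ) (A : Finset (Fin n × Fin n)) : Prop := ¬ IsImproper n A

/-- A partition of the cells of the `n × n` array into `n` pairwise disjoint diagonals. -/
def IsDiagonalPartition (n : ℕ) (D : Fin n → Finset (Fin n × Fin n)) : Prop :=
  (∀ k, IsDiagonal n (D k)) ∧ (∀ k l, k ≠ l → Disjoint (D k) (D l)) ∧
    Finset.univ.biUnion D = Finset.univ

/-- Given a 2-coloring `blue : Fin n × Fin n → Bool` (`true` = blue, `false` = red),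
a set of cells is balanced if it contains a blue cell and a red cell. -/
def IsBalanced (n : ℕ) (blue : Fin n × Fin n → Bool) (D : Finset (Fin n × Fin n)) : Prop :=
  (∃ c ∈ D, blue c = true) ∧ (∃ c ∈ D, blue c = false)

open Finset

lemma crossU_card' (n : ℕ) (i j : Fin n) :
    (({i} ×ˢ (univ : Finset (Fin n))) ∪ ((univ : Finset (Fin n)) ×ˢ {j})).card = 2 * n - 1 := by
  have hinter : (({i} ×ˢ (univ : Finset (Fin n))) ∩ ((univ : Finset (Fin n)) ×ˢ {j})) = {(i,j)} := by
    ext ⟨a,b⟩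
    simp [Finset.mem_product, Prod.ext_iff, eq_comm]
  have h := Finset.card_union_add_card_inter ({i} ×ˢ (univ : Finset (Fin n))) ((univ : Finset (Fin n)) ×ˢ {j})
  rw [hinter] at h
  simp only [Finset.card_product, Finset.card_singleton, Finset.card_univ, Fintype.card_fin,
    one_mul] at h
  have hn : 1 ≤ n := Fin.pos i
  omega

lemma cross_bound' (n : ℕ) (i j : Fin n) (A : Finset (Fin n × Fin n))
    (h : ∀ c ∈ A, (c.1 = i ∨ c.2 = j) ∧ c ≠ (i, j)) : A.card ≤ 2 * n - 2 := by
  have hsub : A ⊆ (({i} ×ˢ (univ : Finset (Fin n))) ∪ ((univ : Finset (Fin n)) ×ˢ {j})).erase (i,j) := by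
    intro c hc
    obtain ⟨h1, h2⟩ := h c hc
    rw [Finset.mem_erase, Finset.mem_union, Finset.mem_product, Finset.mem_product]
    simp only [Finset.mem_singleton, Finset.mem_univ, and_true, true_and]
    exact ⟨h2, h1⟩
  have hmem : (i,j) ∈ (({i} ×ˢ (univ : Finset (Fin n))) ∪ ((univ : Finset (Fin n)) ×ˢ {j})) := by
    simp [Finset.mem_product]
  have := Finset.card_le_card hsub
  rw [Finset.card_erase_of_mem hmem, crossU_card'] at this
  omega

/-- A set containing a proper subset of size ≤ n, and of size ≥ n, has a proper subset of
exactly size n. -/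
lemma extend_proper (n : ℕ) (A P : Finset (Fin n × Fin n)) (hPA : P ⊆ A)
    (hPcard : P.card ≤ n) (hA : n ≤ A.card) (hP : IsProper n P) :
    ∃ B ⊆ A, B.card = n ∧ IsProper n B := by
  obtain ⟨B, hPB, hBA, hBcard⟩ := Finset.exists_subsuperset_card_eq hPA hPcard hA
  refine ⟨B, hBA, hBcard, ?_⟩
  rintro ⟨i, j, h⟩
  exact hP ⟨i, j, fun c hc => h c (hPB hc)⟩

theorem main_part2 (n : ℕ) (hn : 7 ≤ n) (A : Finset (Fin n × Fin n)) (hA : 2 * n - 1 ≤ A.card) :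
    ∃ B ⊆ A, B.card = n ∧ IsProper n B := by
  have hnA : n ≤ A.card := by omega
  -- A is nonempty
  obtain ⟨c1, hc1⟩ : A.Nonempty := Finset.card_pos.mp (by omega)
  by_cases htwo : ∃ c2 ∈ A, c2.1 ≠ c1.1 ∧ c2.2 ≠ c1.2
  · obtain ⟨c2, hc2, hr, hs⟩ := htwo
    -- find x killing the cross (c1.1, c2.2)
    have hx : ∃ x ∈ A, ¬((x.1 = c1.1 ∨ x.2 = c2.2) ∧ x ≠ (c1.1, c2.2)) := by
      by_contra hcon
      push_neg at hcon
      have := cross_bound' n c1.1 c2.2 A hcon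
      omega
    have hy : ∃ y ∈ A, ¬((y.1 = c2.1 ∨ y.2 = c1.2) ∧ y ≠ (c2.1, c1.2)) := by
      by_contra hcon
      push_neg at hcon
      have := cross_bound' n c2.1 c1.2 A hcon
      omega
    obtain ⟨x, hxA, hxp⟩ := hx
    obtain ⟨y, hyA, hyp⟩ := hy
    refine extend_proper n A {c1, c2, x, y} ?_ ?_ hnA ?_
    · intro c hc
      simp only [Finset.mem_insert, Finset.mem_singleton] at hc
      rcases hc with rfl | rfl | rfl | rfl <;> assumption
    · calc ({c1, c2, x, y} : Finset (Fin n × Fin n)).card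
          ≤ ({c2, x, y} : Finset (Fin n × Fin n)).card + 1 := Finset.card_insert_le _ _
        _ ≤ ({x, y} : Finset (Fin n × Fin n)).card + 1 + 1 := by
            exact Nat.add_le_add_right (Finset.card_insert_le _ _) 1
        _ ≤ (({y} : Finset (Fin n × Fin n)).card + 1) + 1 + 1 := by
            exact Nat.add_le_add_right (Nat.add_le_add_right (Finset.card_insert_le _ _) 1) 1
        _ ≤ n := by simp; omega
    · rintro ⟨i, j, h⟩
      have h1 := h c1 (by simp)
      have h2 := h c2 (by simp)
      have hx' := h x (by simp)
      have hy' := h y (by simp)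
      push_neg at hxp hyp
      rcases h1.1 with e1 | e1
      · -- c1.1 = i
        rcases h2.1 with e2 | e2
        · exact hr (e2.trans e1.symm)
        · -- c2.2 = j, so (i,j) = (c1.1, c2.2)
          rcases hx'.1 with ex | ex
          · -- x.1 = i = c1.1
            have := hxp (Or.inl (ex.trans e1.symm))
            exact hx'.2 (by rw [this, ← e1, ← e2])
          · have := hxp (Or.inr (ex.trans e2.symm))
            exact hx'.2 (by rw [this, ← e1, ← e2])
      · -- c1.2 = j
        rcases h2.1 with e2 | e2
        · -- c2.1 = i, so (i,j) = (c2.1, c1.2)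
          rcases hy'.1 with ey | ey
          · have := hyp (Or.inl (ey.trans e2.symm))
            exact hy'.2 (by rw [this, ← e2, ← e1])
          · have := hyp (Or.inr (ey.trans e1.symm))
            exact hy'.2 (by rw [this, ← e2, ← e1])
        · exact hs (e2.trans e1.symm)
  · -- every cell is in row c1.1 or column c1.2
    push_neg at htwo
    obtain ⟨i, j⟩ := c1
    have hsub : A ⊆ (({i} ×ˢ (univ : Finset (Fin n))) ∪ ((univ : Finset (Fin n)) ×ˢ {j})) := by
      intro c hc
      rw [Finset.mem_union, Finset.mem_product, Finset.mem_product]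
      simp only [Finset.mem_singleton, Finset.mem_univ, and_true, true_and]
      rcases eq_or_ne c.1 i with h' | h'
      · exact Or.inl h'
      · exact Or.inr (htwo c hc h')
    have hAeq : A = (({i} ×ˢ (univ : Finset (Fin n))) ∪ ((univ : Finset (Fin n)) ×ˢ {j})) := by
      apply Finset.eq_of_subset_of_card_le hsub
      rw [crossU_card']
      exact hA
    -- pick b1 ≠ b2 both ≠ j, and a ≠ i
    have hb : ∃ b1 ∈ (univ : Finset (Fin n)).erase j, ∃ b2 ∈ (univ : Finset (Fin n)).erase j,
        b1 ≠ b2 := by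
      rw [← Finset.one_lt_card]
      rw [Finset.card_erase_of_mem (Finset.mem_univ j), Finset.card_univ, Fintype.card_fin]
      omega
    obtain ⟨b1, hb1, b2, hb2, hbne⟩ := hb
    rw [Finset.mem_erase] at hb1 hb2
    obtain ⟨a, ha⟩ := Fintype.exists_ne_of_one_lt_card (by simp; omega) i
    have hmem : ∀ c : Fin n × Fin n, c.1 = i ∨ c.2 = j → c ∈ A := by
      intro c hc
      rw [hAeq, Finset.mem_union, Finset.mem_product, Finset.mem_product]
      simp only [Finset.mem_singleton, Finset.mem_univ, and_true, true_and]
      exact hc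
    refine extend_proper n A {(i, j), (i, b1), (i, b2), (a, j)} ?_ ?_ hnA ?_
    · intro c hc
      simp only [Finset.mem_insert, Finset.mem_singleton] at hc
      rcases hc with rfl | rfl | rfl | rfl
      · exact hmem _ (Or.inl rfl)
      · exact hmem _ (Or.inl rfl)
      · exact hmem _ (Or.inl rfl)
      · exact hmem _ (Or.inr rfl)
    · calc ({(i, j), (i, b1), (i, b2), (a, j)} : Finset (Fin n × Fin n)).card
          ≤ ({(i, b1), (i, b2), (a, j)} : Finset (Fin n × Fin n)).card + 1 :=
            Finset.card_insert_le _ _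
        _ ≤ ({(i, b2), (a, j)} : Finset (Fin n × Fin n)).card + 1 + 1 :=
            Nat.add_le_add_right (Finset.card_insert_le _ _) 1
        _ ≤ (({(a, j)} : Finset (Fin n × Fin n)).card + 1) + 1 + 1 :=
            Nat.add_le_add_right (Nat.add_le_add_right (Finset.card_insert_le _ _) 1) 1
        _ ≤ n := by simp; omega
    · rintro ⟨i', j', h⟩
      have h0 := h (i, j) (by simp)
      have h1 := h (i, b1) (by simp)
      have h2 := h (i, b2) (by simp)
      have h3 := h (a, j) (by simp)
      have hii : i = i' := by
        rcases h1.1 with e | e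
        · exact e
        · rcases h2.1 with e' | e'
          · exact e'
          · exact absurd (e.trans e'.symm) hbne
      have hjj : j = j' := by
        rcases h3.1 with e | e
        · exact absurd (e.trans hii.symm) ha
        · exact e
      exact h0.2 (by rw [hii, hjj])

/-- Every improper set has at most `2n - 2` cells; consequently every set of at least
`2n - 1` cells contains a proper subset of size `n`. -/
theorem stmt6 (n : ℕ) (hn : 7 ≤ n) :
    (∀ A : Finset (Fin n × Fin n), IsImproper n A → A.card ≤ 2 * n - 2) ∧
    (∀ A : Finset (Fin n × Fin n), 2 * n - 1 ≤ A.card →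
      ∃ B ⊆ A, B.card = n ∧ IsProper n B) := by
  constructor
  · rintro A ⟨i, j, h⟩
    exact cross_bound' n i j A h
  · exact main_part2 n hn
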